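/- Let L ∈ T. Then Z(L_c) equals the radical of the form restricted to L_c × L_c, and the orthogonal complement L_c^⊥ = {x ∈ L : (x, L_c) = 0} equals the centralizer C_L(L_c). -/

import Mathlib

open scoped Classical

namespace Gen

variable (F L : Type*) [Field F] [CharZero F] [LieRing L] [LieAlgebra F L]

/-- The weight space of a linear functional `α` on a subalgebra `H`. -/
def wt (H : LieSubalgebra F L) (α : Module.Dual F H) : Submodule F L where
  carrier := {x : L | ∀ h : H, ⁅(h : L), x⁆ = α h • x}
  add_mem' := by
    intro a b ha hb h
    rw [lie_add, ha h, hb h, smul_add]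
  zero_mem' := by intro h; simp
  smul_mem' := by
    intro c x hx h
    rw [lie_smul, hx h, smul_comm]

/-- Data for axioms (T1) and (T2): a non-degenerate symmetric invariant bilinear form,
a finite dimensional split toral subalgebra `H` on which the form is non-degenerate,
together with the representatives `t_α ∈ H` of linear functionals on `H`. -/
structure TData where
  B : L →ₗ[F] L →ₗ[F] F
  bsymm : ∀ x y, B x y = B y x
  binv : ∀ x y z, B ⁅x, y⁆ z = B x ⁅y, z⁆
  bnondeg : ∀ x, (∀ y, B x y = 0) → x = 0
  H : LieSubalgebra F L
  hne : H ≠ ⊥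
  hfin : FiniteDimensional F H
  hnondeg : ∀ h : H, (∀ h' : H, B h h' = 0) → h = 0
  decomp : DirectSum.IsInternal (wt F L H)
  t : Module.Dual F H → H
  tspec : ∀ (α : Module.Dual F H) (h : H), B (t α) h = α h

variable {F L}

namespace TData

variable (T : TData F L)

/-- The form transferred to the dual of `H`: `(α, β) = (t_α, t_β)`. -/
def pr (α β : Module.Dual F T.H) : F := T.B (T.t α) (T.t β)

/-- The root system `R = {α : L_α ≠ 0}`. -/
def R : Set (Module.Dual F T.H) := {α | wt F L T.H α ≠ ⊥}

/-- Non-isotropic roots. -/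
def Rx : Set (Module.Dual F T.H) := {α | α ∈ T.R ∧ T.pr α α ≠ 0}

/-- Isotropic roots. -/
def R0 : Set (Module.Dual F T.H) := {α | α ∈ T.R ∧ T.pr α α = 0}

/-- The core: the subalgebra generated by the non-isotropic root spaces. -/
def core : LieSubalgebra F L :=
  LieSubalgebra.lieSpan F L (⋃ α ∈ T.Rx, (wt F L T.H α : Set L))

end TData

variable (F L)

/-- A Lie algebra in the class 𝒯: axioms (T1)–(T6). -/
structure TAlg extends TData F L where
  t3a : ∀ δ ∈ toTData.R0, ∃ x ∈ wt F L toTData.H δ, ∃ y ∈ wt F L toTData.H (-δ),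
          ⁅x, y⁆ = (toTData.t δ : L)
  t3b : ∀ α ∈ toTData.Rx, ∀ x ∈ wt F L toTData.H α, x ≠ 0 →
          ∃ y ∈ wt F L toTData.H (-α), ⁅x, y⁆ = (toTData.t α : L)
  t4 : ∀ α ∈ toTData.Rx, ∀ x ∈ wt F L toTData.H α, ∀ y : L,
          ∃ n : ℕ, ((LieAlgebra.ad F L x) ^ n) y = 0
  t5a : ∀ S1 S2 : Set (Module.Dual F toTData.H), S1.Nonempty → S2.Nonempty →
          S1 ∪ S2 = toTData.Rx → Disjoint S1 S2 →
          ∃ a ∈ S1, ∃ b ∈ S2, toTData.pr a b ≠ 0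
  t5b : ∀ δ ∈ toTData.R0, ∃ α ∈ toTData.Rx, α + δ ∈ toTData.R
  t6free : Module.Free ℤ (AddSubgroup.closure toTData.R0)
  t6fin : Module.Finite ℤ (AddSubgroup.closure toTData.R0)

end Gen
namespace Gen

variable {F L : Type*} [Field F] [CharZero F] [LieRing L] [LieAlgebra F L]

namespace TAlg

variable (T : TAlg F L)

lemma mem_wt {α : Module.Dual F T.toTData.H} {x : L} :
    x ∈ wt F L T.toTData.H α ↔ ∀ h : T.toTData.H, ⁅(h : L), x⁆ = α h • x := Iff.rfl

lemma lie_wt_wt {μ ν : Module.Dual F T.toTData.H} {x y : L}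
    (hx : x ∈ wt F L T.toTData.H μ) (hy : y ∈ wt F L T.toTData.H ν) :
    ⁅x, y⁆ ∈ wt F L T.toTData.H (μ + ν) := by
  rw [mem_wt]
  intro h
  have hx' := hx h
  have hy' := hy h
  calc ⁅(h : L), ⁅x, y⁆⁆ = ⁅⁅(h : L), x⁆, y⁆ + ⁅x, ⁅(h : L), y⁆⁆ := leibniz_lie _ _ _
    _ = (μ h + ν h) • ⁅x, y⁆ := by rw [hx', hy', smul_lie, lie_smul, add_smul]
    _ = (μ + ν) h • ⁅x, y⁆ := rfl

lemma pr_eq (μ ν : Module.Dual F T.toTData.H) :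
    T.toTData.pr μ ν = μ (T.toTData.t ν) := T.toTData.tspec μ (T.toTData.t ν)

lemma pr_comm (μ ν : Module.Dual F T.toTData.H) :
    T.toTData.pr μ ν = T.toTData.pr ν μ := T.toTData.bsymm _ _

lemma lie_t_of_mem_wt {μ ν : Module.Dual F T.toTData.H} {y : L}
    (hy : y ∈ wt F L T.toTData.H ν) :
    ⁅((T.toTData.t μ : L)), y⁆ = T.toTData.pr ν μ • y := by
  have := hy (T.toTData.t μ)
  rw [this, pr_eq]

lemma t_neg (γ : Module.Dual F T.toTData.H) : T.toTData.t (-γ) = - T.toTData.t γ := by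
  have h : T.toTData.t (-γ) + T.toTData.t γ = 0 := by
    apply T.toTData.hnondeg
    intro h'
    have h1 := T.toTData.tspec (-γ) h'
    have h2 := T.toTData.tspec γ h'
    have : ((T.toTData.t (-γ) + T.toTData.t γ : T.toTData.H) : L)
        = (T.toTData.t (-γ) : L) + (T.toTData.t γ : L) := rfl
    rw [this, map_add, LinearMap.add_apply, h1, h2]
    simp
  exact eq_neg_of_add_eq_zero_left h

lemma t_ne_zero {γ : Module.Dual F T.toTData.H} (hγ : γ ∈ T.toTData.Rx) :
    T.toTData.t γ ≠ 0 := by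
  intro h
  apply hγ.2
  show T.toTData.B (T.toTData.t γ) (T.toTData.t γ) = 0
  rw [h]
  simp

lemma exists_sl2 {γ : Module.Dual F T.toTData.H} (hγ : γ ∈ T.toTData.Rx) :
    ∃ e f : L, e ∈ wt F L T.toTData.H γ ∧ e ≠ 0 ∧ f ∈ wt F L T.toTData.H (-γ) ∧ f ≠ 0 ∧
      ⁅e, f⁆ = ((T.toTData.t γ : L)) := by
  obtain ⟨e, he, he0⟩ := (Submodule.ne_bot_iff _).mp hγ.1
  obtain ⟨f, hf, hef⟩ := T.t3b γ hγ e he he0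
  refine ⟨e, f, he, he0, hf, ?_, hef⟩
  intro h0
  apply t_ne_zero T hγ
  have : ((T.toTData.t γ : L)) = 0 := by rw [← hef, h0, lie_zero]
  exact_mod_cast this

lemma neg_mem_Rx {γ : Module.Dual F T.toTData.H} (hγ : γ ∈ T.toTData.Rx) :
    -γ ∈ T.toTData.Rx := by
  obtain ⟨e, f, he, he0, hf, hf0, hef⟩ := exists_sl2 T hγ
  constructor
  · exact (Submodule.ne_bot_iff _).mpr ⟨f, hf, hf0⟩
  · have : T.toTData.pr (-γ) (-γ) = T.toTData.pr γ γ := by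
      rw [pr_eq, pr_eq, t_neg]
      simp
    rw [this]
    exact hγ.2

lemma ad_pow_wt {γ ν : Module.Dual F T.toTData.H} {x v : L}
    (hx : x ∈ wt F L T.toTData.H γ) (hv : v ∈ wt F L T.toTData.H ν) (n : ℕ) :
    ((LieAlgebra.ad F L x) ^ n) v ∈ wt F L T.toTData.H (ν + n • γ) := by
  induction n with
  | zero => simpa using hv
  | succ n ih =>
    have h1 : ((LieAlgebra.ad F L x) ^ (n + 1)) v = ⁅x, ((LieAlgebra.ad F L x) ^ n) v⁆ := by
      rw [pow_succ', Module.End.mul_apply, LieAlgebra.ad_apply]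
    rw [h1]
    have h2 := lie_wt_wt T hx ih
    have h3 : γ + (ν + n • γ) = ν + (n + 1) • γ := by
      rw [succ_nsmul]; abel
    rwa [h3] at h2

end TAlg
end Gen
namespace Gen
namespace TAlg

set_option linter.unusedSectionVars false

variable {F L : Type*} [Field F] [CharZero F] [LieRing L] [LieAlgebra F L]

/-- Auxiliary coefficient sequence for the sl2 string computation. -/
private def Cseq (a b : F) : ℕ → F
  | 0 => a
  | (m+1) => Cseq a b m + (a - ((m+1 : ℕ) : F) * b)

private lemma cseq_closed (a b : F) (m : ℕ) :
    2 * Cseq a b m = (2 * ((m : F) + 1)) * a - ((m : F) * ((m : F) + 1)) * b := by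
  induction m with
  | zero => simp only [Cseq, Nat.cast_zero]; ring
  | succ m ih =>
    rw [Cseq, mul_add, ih]
    push_cast
    ring

variable (T : TAlg F L)

lemma integrality {γ μ : Module.Dual F T.toTData.H} (hγ : γ ∈ T.toTData.Rx)
    {v : L} (hv : v ∈ wt F L T.toTData.H μ) (hv0 : v ≠ 0) :
    ∃ m : ℤ, 2 * T.toTData.pr μ γ = (m : F) * T.toTData.pr γ γ := by
  obtain ⟨e, f, he, he0, hf, hf0, hef⟩ := exists_sl2 T hγ
  set E := LieAlgebra.ad F L e with hE
  obtain ⟨n, hn⟩ := T.t4 γ hγ e he v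
  have hex : ∃ n, (E ^ n) v = 0 := ⟨n, hn⟩
  have hnE0 : (E ^ Nat.find hex) v = 0 := Nat.find_spec hex
  have hnEpos : 0 < Nat.find hex := by
    rcases Nat.eq_zero_or_pos (Nat.find hex) with h | h
    · exfalso; apply hv0; rw [h] at hnE0; simpa using hnE0
    · exact h
  obtain ⟨j, hj⟩ : ∃ j, Nat.find hex = j + 1 :=
    ⟨Nat.find hex - 1, (Nat.succ_pred_eq_of_pos hnEpos).symm⟩
  set w := (E ^ j) v with hw
  have hw0 : w ≠ 0 := Nat.find_min hex (by omega)
  have hEw : ⁅e, w⁆ = 0 := by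
    have h1 : (E ^ (j+1)) v = 0 := by rw [← hj]; exact hnE0
    rw [pow_succ', Module.End.mul_apply] at h1
    simpa [hE, LieAlgebra.ad_apply] using h1
  set κ := μ + j • γ with hκ
  have hwκ : w ∈ wt F L T.toTData.H κ := ad_pow_wt T he hv j
  have hnegRx := neg_mem_Rx T hγ
  set Ff := LieAlgebra.ad F L f with hFf
  obtain ⟨n2, hn2⟩ := T.t4 (-γ) hnegRx f hf w
  have hex2 : ∃ d, (Ff ^ d) w = 0 := ⟨n2, hn2⟩
  have hdd0 : (Ff ^ Nat.find hex2) w = 0 := Nat.find_spec hex2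
  have hddpos : 0 < Nat.find hex2 := by
    rcases Nat.eq_zero_or_pos (Nat.find hex2) with h | h
    · exfalso; apply hw0; rw [h] at hdd0; simpa using hdd0
    · exact h
  obtain ⟨d', hd'⟩ : ∃ d', Nat.find hex2 = d' + 1 :=
    ⟨Nat.find hex2 - 1, (Nat.succ_pred_eq_of_pos hddpos).symm⟩
  have hFpow : ∀ i : ℕ, (Ff ^ i) w ∈ wt F L T.toTData.H (κ + i • (-γ)) :=
    fun i => ad_pow_wt T hf hwκ i
  have key : ∀ m : ℕ, ⁅e, (Ff ^ (m+1)) w⁆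
      = Cseq (T.toTData.pr κ γ) (T.toTData.pr γ γ) m • (Ff ^ m) w := by
    intro m
    induction m with
    | zero =>
      have h1 : (Ff ^ 1) w = ⁅f, w⁆ := by simp [hFf, LieAlgebra.ad_apply]
      rw [h1, leibniz_lie, hef, hEw, lie_zero, add_zero, lie_t_of_mem_wt T hwκ]
      simp [Cseq]
    | succ m ih =>
      have hstep : (Ff ^ (m+2)) w = ⁅f, (Ff ^ (m+1)) w⁆ := by
        rw [pow_succ', Module.End.mul_apply]
        simp [hFf, LieAlgebra.ad_apply]
      have hu : ⁅f, (Ff ^ m) w⁆ = (Ff ^ (m+1)) w := by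
        rw [pow_succ', Module.End.mul_apply]
        simp [hFf, LieAlgebra.ad_apply]
      have hmem := hFpow (m+1)
      have hc : T.toTData.pr (κ + (m+1) • (-γ)) γ
          = T.toTData.pr κ γ - ((m+1 : ℕ) : F) * T.toTData.pr γ γ := by
        rw [pr_eq, pr_eq, pr_eq]
        simp [nsmul_eq_mul]
        ring
      calc ⁅e, (Ff ^ (m+1+1)) w⁆ = ⁅e, ⁅f, (Ff ^ (m+1)) w⁆⁆ := by rw [hstep]
        _ = ⁅⁅e, f⁆, (Ff ^ (m+1)) w⁆ + ⁅f, ⁅e, (Ff ^ (m+1)) w⁆⁆ := leibniz_lie _ _ _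
        _ = (T.toTData.pr κ γ - ((m+1 : ℕ) : F) * T.toTData.pr γ γ) • (Ff ^ (m+1)) w
            + Cseq (T.toTData.pr κ γ) (T.toTData.pr γ γ) m • (Ff ^ (m+1)) w := by
              rw [hef, lie_t_of_mem_wt T hmem, hc, ih, lie_smul, hu]
        _ = Cseq (T.toTData.pr κ γ) (T.toTData.pr γ γ) (m+1) • (Ff ^ (m+1)) w := by
              rw [← add_smul]
              congr 1
              rw [Cseq]
              ring
  have hzero : Cseq (T.toTData.pr κ γ) (T.toTData.pr γ γ) d' = 0 := by
    have h1 := key d'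
    have h2 : (Ff ^ (d'+1)) w = 0 := by rw [← hd']; exact hdd0
    rw [h2, lie_zero] at h1
    have h3 : (Ff ^ d') w ≠ 0 := Nat.find_min hex2 (by omega)
    rcases smul_eq_zero.mp h1.symm with h | h
    · exact h
    · exact absurd h h3
  have hclosed := cseq_closed (T.toTData.pr κ γ) (T.toTData.pr γ γ) d'
  rw [hzero, mul_zero] at hclosed
  have hd1 : ((d' : F) + 1) ≠ 0 := by
    have := Nat.cast_add_one_ne_zero (R := F) d'
    exact_mod_cast this
  have h2a : 2 * T.toTData.pr κ γ = (d' : F) * T.toTData.pr γ γ := by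
    have hfac : (2 * T.toTData.pr κ γ - (d' : F) * T.toTData.pr γ γ) * ((d' : F) + 1) = 0 := by
      linear_combination -hclosed
    rcases mul_eq_zero.mp hfac with h | h
    · linear_combination h
    · exact absurd h hd1
  have hκγ : T.toTData.pr κ γ = T.toTData.pr μ γ + (j : F) * T.toTData.pr γ γ := by
    rw [hκ, pr_eq, pr_eq, pr_eq]
    simp [nsmul_eq_mul]
  refine ⟨(d' : ℤ) - 2 * (j : ℤ), ?_⟩
  rw [hκγ] at h2a
  push_cast
  linear_combination h2a

end TAlg
end Gen
namespace Gen
namespace TAlg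

set_option linter.unusedSectionVars false

variable {F L : Type*} [Field F] [CharZero F] [LieRing L] [LieAlgebra F L]

variable (T : TAlg F L)

theorem orth {α β : Module.Dual F T.toTData.H} (hα : α ∈ T.toTData.Rx) (hβ : β ∈ T.toTData.R0) :
    T.toTData.pr α β = 0 := by
  by_contra hs
  set s := T.toTData.pr α β with hsdef
  obtain ⟨vβ, hvβ, hvβ0⟩ := (Submodule.ne_bot_iff _).mp hβ.1
  obtain ⟨m₀, hm₀⟩ := integrality T hα hvβ hvβ0
  rw [pr_comm T β α, ← hsdef] at hm₀
  have h2s : (2 : F) * s ≠ 0 := mul_ne_zero two_ne_zero hs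
  have hm₀0 : m₀ ≠ 0 := by
    intro h
    rw [h] at hm₀
    have : s = 0 := by linear_combination hm₀ / 2
    exact hs this
  have hββ : β (T.toTData.t β) = 0 := by rw [← pr_eq]; exact hβ.2
  have hαβval : α (T.toTData.t β) = s := by rw [← pr_eq]
  have hval : ∀ k : ℤ, (α + k • β) (T.toTData.t β) = s := by
    intro k
    rw [LinearMap.add_apply, LinearMap.smul_apply, hββ, hαβval]
    simp
  have hprk : ∀ k : ℤ, T.toTData.pr (α + k • β) β = s := by
    intro k; rw [pr_eq]; exact hval k
  have hβval : ∀ k : ℤ, β (T.toTData.t (α + k • β)) = s := by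
    intro k
    rw [← pr_eq, pr_comm]
    exact hprk k
  -- norm expansion
  have hexp : ∀ k : ℤ, T.toTData.pr (α + k • β) (α + k • β)
      = T.toTData.pr α α + (2 * (k : F)) * s := by
    intro k
    have hβtα : β (T.toTData.t α) = s := by
      rw [← pr_eq T β α, pr_comm]
    have e3 : T.toTData.pr (α + k • β) α = T.toTData.pr α α + (k : F) * s := by
      rw [pr_eq T (α + k • β) α, LinearMap.add_apply, LinearMap.smul_apply, zsmul_eq_mul, hβtα,
        ← pr_eq T α α]
    have e5 : α (T.toTData.t (α + k • β)) = T.toTData.pr α α + (k : F) * s := by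
      rw [← pr_eq T α (α + k • β), pr_comm]
      exact e3
    rw [pr_eq T (α + k • β) (α + k • β), LinearMap.add_apply, LinearMap.smul_apply, zsmul_eq_mul,
      hβval k, e5]
    ring
  -- the bound
  have hbound : ∀ k : ℤ, wt F L T.toTData.H (α + k • β) ≠ ⊥ → k.natAbs ≤ 2 := by
    intro k hk
    by_cases hQ : T.toTData.pr (α + k • β) (α + k • β) = 0
    · have h1 : T.toTData.pr α α = -(2 * (k : F)) * s := by
        have := hexp k
        rw [hQ] at this
        linear_combination -this
      have h2 : (2 * s) * (1 + (m₀ : F) * (k : F)) = 0 := by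
        linear_combination hm₀ + (m₀ : F) * h1
      have h3 : (1 : F) + (m₀ : F) * (k : F) = 0 := by
        rcases mul_eq_zero.mp h2 with h | h
        · exact absurd h h2s
        · exact h
      have h4 : 1 + m₀ * k = 0 := by
        have : ((1 + m₀ * k : ℤ) : F) = 0 := by push_cast; linear_combination h3
        exact_mod_cast this
      have hku : IsUnit k := IsUnit.of_mul_eq_one (-m₀) (by linear_combination -h4)
      rcases Int.isUnit_iff.mp hku with h | h <;> simp [h]
    · have hkRx : (α + k • β) ∈ T.toTData.Rx := ⟨hk, hQ⟩
      obtain ⟨mk, hmk⟩ := integrality T hkRx hvβ hvβ0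
      rw [pr_comm T β _, hprk k, hexp k] at hmk
      have hmk0 : mk ≠ 0 := by
        intro h
        rw [h] at hmk
        have : s = 0 := by linear_combination hmk / 2
        exact hs this
      have hcancel : (2 * s) * ((m₀ : F) - (mk : F)) = (2 * s) * ((m₀ : F) * (mk : F) * (k : F)) := by
        linear_combination (m₀ : F) * hmk - (mk : F) * hm₀
      have hF : ((m₀ - mk : ℤ) : F) = ((m₀ * mk * k : ℤ) : F) := by
        push_cast
        exact mul_left_cancel₀ h2s hcancel
      have hZ : m₀ - mk = m₀ * mk * k := Int.cast_injective hF
      have hnat : m₀.natAbs * mk.natAbs * k.natAbs ≤ m₀.natAbs + mk.natAbs := by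
        calc m₀.natAbs * mk.natAbs * k.natAbs = (m₀ * mk * k).natAbs := by
              rw [Int.natAbs_mul, Int.natAbs_mul]
          _ = (m₀ - mk).natAbs := by rw [hZ]
          _ ≤ m₀.natAbs + mk.natAbs := Int.natAbs_sub_le _ _
      have ha : 1 ≤ m₀.natAbs := Int.natAbs_pos.mpr hm₀0
      have hb : 1 ≤ mk.natAbs := Int.natAbs_pos.mpr hmk0
      nlinarith [hnat, ha, hb, Nat.mul_le_mul ha hb]
  -- the Heisenberg module
  obtain ⟨p, hp, q, hq, hpq⟩ := T.t3a β hβ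
  set M : Submodule F L := ⨆ k : ℤ, wt F L T.toTData.H (α + k • β) with hM
  have hle : ∀ k : ℤ, wt F L T.toTData.H (α + k • β) ≤ M := by
    intro k
    rw [hM]
    exact le_iSup (fun k : ℤ => wt F L T.toTData.H (α + k • β)) k
  have c1 : ∀ u ∈ M, ⁅((T.toTData.t β : L)), u⁆ = s • u := by
    intro u hu
    refine Submodule.iSup_induction (motive := fun z => ⁅((T.toTData.t β : L)), z⁆ = s • z) _
      (hu : u ∈ ⨆ k : ℤ, wt F L T.toTData.H (α + k • β))
      (fun k x hx => ?_) (by simp) (fun x y hx hy => ?_)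
    · rw [lie_t_of_mem_wt T hx, hprk k]
    · rw [lie_add, hx, hy, smul_add]
  have hPM : ∀ u ∈ M, ⁅p, u⁆ ∈ M := by
    intro u hu
    refine Submodule.iSup_induction (motive := fun z => ⁅p, z⁆ ∈ M) _
      (hu : u ∈ ⨆ k : ℤ, wt F L T.toTData.H (α + k • β))
      (fun k x hx => ?_) (by simp) (fun x y hx hy => ?_)
    · have h1 := lie_wt_wt T hp hx
      have h2 : β + (α + k • β) = α + (k + 1) • β := by
        rw [add_smul, one_smul]; abel
      rw [h2] at h1
      exact hle (k+1) h1
    · rw [lie_add]; exact M.add_mem hx hy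
  have hQM : ∀ u ∈ M, ⁅q, u⁆ ∈ M := by
    intro u hu
    refine Submodule.iSup_induction (motive := fun z => ⁅q, z⁆ ∈ M) _
      (hu : u ∈ ⨆ k : ℤ, wt F L T.toTData.H (α + k • β))
      (fun k x hx => ?_) (by simp) (fun x y hx hy => ?_)
    · have h1 := lie_wt_wt T hq hx
      have h2 : -β + (α + k • β) = α + (k - 1) • β := by
        rw [sub_smul, one_smul]; abel
      rw [h2] at h1
      exact hle (k-1) h1
    · rw [lie_add]; exact M.add_mem hx hy
  set P : Module.End F L := LieAlgebra.ad F L p with hP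
  have hPapp : ∀ x : L, P x = ⁅p, x⁆ := fun x => rfl
  have c3 : ∀ u ∈ M, (P ^ 7) u = 0 := by
    intro u hu
    refine Submodule.iSup_induction (motive := fun z => (P ^ 7) z = 0) _
      (hu : u ∈ ⨆ k : ℤ, wt F L T.toTData.H (α + k • β))
      (fun k x hx => ?_) (by simp)
      (fun x y hx hy => by rw [map_add, hx, hy, add_zero])
    · by_cases hk2 : k.natAbs ≤ 2
      · have h7 := ad_pow_wt T hp hx 7
        have h77 : (7 : ℕ) • β = (7 : ℤ) • β := by
          rw [show ((7:ℤ)) = ((7:ℕ) : ℤ) by norm_num, natCast_zsmul]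
        have heq : (α + k • β) + (7 : ℕ) • β = α + (k + 7) • β := by
          rw [h77, add_smul]; abel
        rw [heq] at h7
        have hbot : wt F L T.toTData.H (α + (k + 7) • β) = ⊥ := by
          by_contra hne
          have := hbound (k + 7) hne
          omega
        rw [hbot] at h7
        simpa using h7
      · have hbot : wt F L T.toTData.H (α + k • β) = ⊥ := by
          by_contra hne
          exact hk2 (hbound k hne)
        rw [hbot] at hx
        have : x = 0 := by simpa using hx
        rw [this, map_zero]
  have base : ∀ u ∈ M, ⁅p, ⁅q, u⁆⁆ = ⁅q, ⁅p, u⁆⁆ + s • u := by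
    intro u hu
    rw [leibniz_lie, hpq, c1 u hu]
    abel
  have hstep : ∀ (m : ℕ) (x : L), (P ^ (m + 1)) x = (P ^ m) (P x) := by
    intro m x
    rw [pow_succ, Module.End.mul_apply]
  have idn : ∀ n : ℕ, ∀ u ∈ M,
      (P ^ (n + 1)) ⁅q, u⁆ = ⁅q, (P ^ (n + 1)) u⁆ + (((n : F) + 1) * s) • (P ^ n) u := by
    intro n
    induction n with
    | zero =>
      intro u hu
      simp only [pow_one, pow_zero, Module.End.one_apply, Nat.cast_zero, zero_add, one_mul]
      rw [hPapp, hPapp, base u hu]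
    | succ n ih =>
      intro u hu
      have hPu : P u ∈ M := by rw [hPapp]; exact hPM u hu
      calc (P ^ (n + 1 + 1)) ⁅q, u⁆ = (P ^ (n + 1)) (P ⁅q, u⁆) := hstep _ _
        _ = (P ^ (n + 1)) (⁅q, P u⁆ + s • u) := by
              rw [hPapp]
              rw [show ⁅p, ⁅q, u⁆⁆ = ⁅q, ⁅p, u⁆⁆ + s • u from base u hu]
              rw [← hPapp]
        _ = (P ^ (n + 1)) ⁅q, P u⁆ + s • (P ^ (n + 1)) u := by rw [map_add, map_smul]
        _ = ⁅q, (P ^ (n + 1)) (P u)⁆ + (((n : F) + 1) * s) • (P ^ n) (P u)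
              + s • (P ^ (n + 1)) u := by rw [ih (P u) hPu]
        _ = ⁅q, (P ^ (n + 1 + 1)) u⁆ + (((n : F) + 1) * s) • (P ^ (n + 1)) u
              + s • (P ^ (n + 1)) u := by rw [← hstep, ← hstep]
        _ = ⁅q, (P ^ (n + 1 + 1)) u⁆ + (((((n : ℕ) + 1 : ℕ) : F) + 1) * s) • (P ^ (n + 1)) u := by
              rw [add_assoc, ← add_smul]
              congr 2
              push_cast
              ring
  have desc : ∀ n : ℕ, (∀ u ∈ M, (P ^ (n + 2)) u = 0) → ∀ u ∈ M, (P ^ (n + 1)) u = 0 := by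
    intro n hkill u hu
    have hqu : ⁅q, u⁆ ∈ M := hQM u hu
    have h1 := idn (n + 1) u hu
    rw [hkill _ hqu, hkill u hu, lie_zero, zero_add] at h1
    have hcoef : ((((n : ℕ) + 1 : ℕ) : F) + 1) * s ≠ 0 := by
      apply mul_ne_zero _ hs
      have hcast : ((((n : ℕ) + 1 : ℕ) : F) + 1) = (((n : ℕ) + 2 : ℕ) : F) := by push_cast; ring
      rw [hcast]
      exact Nat.cast_ne_zero.mpr (by omega)
    rcases smul_eq_zero.mp h1.symm with h | h
    · exact absurd h hcoef
    · exact h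
  have h6 := desc 5 c3
  have h5 := desc 4 h6
  have h4 := desc 3 h5
  have h3 := desc 2 h4
  have h2 := desc 1 h3
  have h1k := desc 0 h2
  obtain ⟨e₀, he₀, he₀0⟩ := (Submodule.ne_bot_iff _).mp hα.1
  have he₀M : e₀ ∈ M := by
    have h0 : α + (0 : ℤ) • β = α := by simp
    exact hle 0 (by rw [h0]; exact he₀)
  have hpe : ⁅p, e₀⁆ = 0 := by
    have hh := h1k e₀ he₀M
    rwa [pow_one] at hh
  have hqe : ⁅q, e₀⁆ ∈ M := hQM e₀ he₀M
  have hpqe : ⁅p, ⁅q, e₀⁆⁆ = 0 := by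
    have hh := h1k _ hqe
    rwa [pow_one] at hh
  have hfin := base e₀ he₀M
  rw [hpqe, hpe, lie_zero, zero_add] at hfin
  rcases smul_eq_zero.mp hfin.symm with h | h
  · exact hs h
  · exact he₀0 h

end TAlg
end Gen
namespace Gen
namespace TAlg

set_option linter.unusedSectionVars false

variable {F L : Type*} [Field F] [CharZero F] [LieRing L] [LieAlgebra F L]

variable (T : TAlg F L)

lemma pr_add_left (μ ν κ : Module.Dual F T.toTData.H) :
    T.toTData.pr (μ + ν) κ = T.toTData.pr μ κ + T.toTData.pr ν κ := by
  rw [pr_eq, pr_eq, pr_eq, LinearMap.add_apply]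

lemma pr_expand (μ ν : Module.Dual F T.toTData.H) :
    T.toTData.pr (μ + ν) (μ + ν)
      = T.toTData.pr μ μ + T.toTData.pr μ ν + T.toTData.pr ν μ + T.toTData.pr ν ν := by
  rw [pr_add_left T μ ν (μ + ν), pr_comm T μ (μ + ν), pr_add_left T μ ν μ,
    pr_comm T ν (μ + ν), pr_add_left T μ ν ν, pr_comm T ν μ]
  ring

lemma wt_le_core {α : Module.Dual F T.toTData.H} (hα : α ∈ T.toTData.Rx) :
    wt F L T.toTData.H α ≤ T.toTData.core := by
  intro x hx
  apply LieSubalgebra.subset_lieSpan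
  exact Set.mem_biUnion hα hx

lemma iSup_wt_eq_top : ⨆ ν, wt F L T.toTData.H ν = ⊤ :=
  T.toTData.decomp.submodule_iSup_eq_top

/-- The core is an ideal. -/
theorem lie_core_mem {x : L} (hx : x ∈ T.toTData.core) (y : L) : ⁅x, y⁆ ∈ T.toTData.core := by
  let K : LieSubalgebra F L :=
  { carrier := {z : L | z ∈ T.toTData.core ∧ ∀ y : L, ⁅z, y⁆ ∈ T.toTData.core}
    add_mem' := by
      intro a b ha hb
      exact ⟨T.toTData.core.add_mem ha.1 hb.1,
        fun y => by rw [add_lie]; exact T.toTData.core.add_mem (ha.2 y) (hb.2 y)⟩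
    zero_mem' :=
      ⟨T.toTData.core.zero_mem, fun y => by rw [zero_lie]; exact T.toTData.core.zero_mem⟩
    smul_mem' := by
      intro c z hz
      exact ⟨T.toTData.core.smul_mem c hz.1,
        fun y => by rw [smul_lie]; exact T.toTData.core.smul_mem c (hz.2 y)⟩
    lie_mem' := by
      intro a b ha hb
      refine ⟨T.toTData.core.lie_mem ha.1 hb.1, fun y => ?_⟩
      rw [lie_lie]
      exact sub_mem (ha.2 _) (hb.2 _) }
  have hsub : (⋃ α ∈ T.toTData.Rx, (wt F L T.toTData.H α : Set L)) ⊆ K := by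
    intro z hz
    obtain ⟨α', hα', hzwt⟩ := Set.mem_iUnion₂.mp hz
    refine ⟨wt_le_core T hα' hzwt, fun y => ?_⟩
    have hy : y ∈ ⨆ ν, wt F L T.toTData.H ν := by rw [iSup_wt_eq_top]; trivial
    refine Submodule.iSup_induction (motive := fun w => ⁅z, w⁆ ∈ T.toTData.core) _ hy
      (fun ν w hw => ?_)
      (by rw [lie_zero]; exact T.toTData.core.zero_mem)
      (fun a b hb hc => by rw [lie_add]; exact T.toTData.core.add_mem hb hc)
    by_cases hbot : wt F L T.toTData.H (α' + ν) = ⊥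
    · have h1 := lie_wt_wt T hzwt hw
      rw [hbot] at h1
      have h2 : ⁅z, w⁆ = 0 := by simpa using h1
      rw [h2]
      exact T.toTData.core.zero_mem
    · by_cases hw0 : w = 0
      · rw [hw0, lie_zero]; exact T.toTData.core.zero_mem
      · have hν : wt F L T.toTData.H ν ≠ ⊥ := (Submodule.ne_bot_iff _).mpr ⟨w, hw, hw0⟩
        by_cases hνq : T.toTData.pr ν ν = 0
        · have ho := orth T hα' ⟨hν, hνq⟩
          have ho' : T.toTData.pr ν α' = 0 := by rw [pr_comm]; exact ho
          have hnorm : T.toTData.pr (α' + ν) (α' + ν) = T.toTData.pr α' α' := by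
            rw [pr_expand, ho, ho', hνq]
            ring
          have hRx : (α' + ν) ∈ T.toTData.Rx := ⟨hbot, by rw [hnorm]; exact hα'.2⟩
          exact wt_le_core T hRx (lie_wt_wt T hzwt hw)
        · have hRx : ν ∈ T.toTData.Rx := ⟨hν, hνq⟩
          exact T.toTData.core.lie_mem (wt_le_core T hα' hzwt) (wt_le_core T hRx hw)
  have hKle : T.toTData.core ≤ K := LieSubalgebra.lieSpan_le.mpr hsub
  exact (hKle hx).2 y

/-- An element centralizing the core is orthogonal to the core. -/
theorem perp_of_centralizes (z : L) (hz : ∀ y ∈ T.toTData.core, ⁅z, y⁆ = 0) :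
    ∀ y ∈ T.toTData.core, T.toTData.B z y = 0 := by
  let K : LieSubalgebra F L :=
  { carrier := {y : L | y ∈ T.toTData.core ∧ T.toTData.B z y = 0}
    add_mem' := by
      intro a b ha hb
      exact ⟨T.toTData.core.add_mem ha.1 hb.1, by rw [map_add, ha.2, hb.2, add_zero]⟩
    zero_mem' := ⟨T.toTData.core.zero_mem, map_zero _⟩
    smul_mem' := by
      intro c y hy
      exact ⟨T.toTData.core.smul_mem c hy.1, by rw [map_smul, hy.2, smul_zero]⟩
    lie_mem' := by
      intro a b ha hb
      refine ⟨T.toTData.core.lie_mem ha.1 hb.1, ?_⟩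
      have h1 : T.toTData.B ⁅z, a⁆ b = T.toTData.B z ⁅a, b⁆ := T.toTData.binv z a b
      rw [← h1, hz a ha.1]
      simp }
  have hsub : (⋃ α ∈ T.toTData.Rx, (wt F L T.toTData.H α : Set L)) ⊆ K := by
    intro w hw
    obtain ⟨α, hα, hwα⟩ := Set.mem_iUnion₂.mp hw
    have hwc : w ∈ T.toTData.core := wt_le_core T hα hwα
    refine ⟨hwc, ?_⟩
    have ht : ⁅((T.toTData.t α : L)), w⁆ = T.toTData.pr α α • w := lie_t_of_mem_wt T hwα
    have h2 : T.toTData.B z ⁅w, ((T.toTData.t α : L))⁆ = 0 := by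
      rw [← T.toTData.binv z w _, hz w hwc]
      simp
    have h3 : T.toTData.B z ⁅((T.toTData.t α : L)), w⁆ = 0 := by
      rw [← lie_skew ((T.toTData.t α : L)) w, map_neg, h2, neg_zero]
    rw [ht, map_smul, smul_eq_mul] at h3
    exact (mul_eq_zero.mp h3).resolve_left hα.2
  have hKle : T.toTData.core ≤ K := LieSubalgebra.lieSpan_le.mpr hsub
  intro y hy
  exact (hKle hy).2

/-- An element orthogonal to the core centralizes it. -/
theorem centralizes_of_perp (z : L) (hz : ∀ y ∈ T.toTData.core, T.toTData.B z y = 0) :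
    ∀ y ∈ T.toTData.core, ⁅z, y⁆ = 0 := by
  intro y hy
  apply T.toTData.bnondeg
  intro w
  rw [T.toTData.binv z y w]
  exact hz _ (lie_core_mem T hy w)

end TAlg
end Gen

/-- For `L ∈ 𝒯`, `Z(L_c)` equals the radical of the form restricted to
`L_c`, and `L_c^⊥ = C_L(L_c)`. -/
theorem center_core_eq_radical_and_perp_eq_centralizer
    (F L : Type*) [Field F] [CharZero F] [LieRing L] [LieAlgebra F L]
    (T : Gen.TAlg F L) :
    ({z : L | z ∈ T.toTData.core ∧ ∀ x ∈ T.toTData.core, ⁅z, x⁆ = 0}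
      = {z : L | z ∈ T.toTData.core ∧ ∀ x ∈ T.toTData.core, T.toTData.B z x = 0}) ∧
    ({x : L | ∀ y ∈ T.toTData.core, T.toTData.B x y = 0}
      = {x : L | ∀ y ∈ T.toTData.core, ⁅x, y⁆ = 0}) := by
  constructor
  · ext z
    simp only [Set.mem_setOf_eq]
    constructor
    · rintro ⟨hzc, hcent⟩
      exact ⟨hzc, Gen.TAlg.perp_of_centralizes T z hcent⟩
    · rintro ⟨hzc, hperp⟩
      exact ⟨hzc, Gen.TAlg.centralizes_of_perp T z hperp⟩
  · ext x
    simp only [Set.mem_setOf_eq]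
    constructor
    · intro hperp
      exact Gen.TAlg.centralizes_of_perp T x hperp
    · intro hcent
      exact Gen.TAlg.perp_of_centralizes T x hcent
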